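/- Let f₁, f₂ be delta series over a field of characteristic zero, and define for n,k ≥ 1: α_{nk} = [y^n] f₂(y)^k, β_{nk} = [y^n] f₁(y)^k, γ_{nk} = [y^n] (f₁ ∘ f₂)(y)^k. Then γ_{nk} = ∑_i α_{ni} β_{ik} (Jabotinsky matrix composition: C = A·B). -/

import Mathlib

open PowerSeries Finset

/-- If the constant coefficient of `f` is zero, then `coeff a (f^i) = 0` for `a < i`. -/
lemma jab_coeff_pow_eq_zero {K : Type*} [CommRing K] (f : PowerSeries K)
    (hf : constantCoeff f = 0) : ∀ i a : ℕ, a < i → coeff a (f ^ i) = 0 := by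
  intro i
  induction i with
  | zero => intro a ha; omega
  | succ i ih =>
    intro a ha
    rw [pow_succ, coeff_mul]
    apply Finset.sum_eq_zero
    rintro ⟨x, y⟩ hxy
    rw [Finset.HasAntidiagonal.mem_antidiagonal] at hxy
    rcases lt_or_ge x i with hx | hx
    · rw [ih x hx, zero_mul]
    · have hx' : x = a ∧ y = 0 := by omega
      rw [hx'.2, coeff_zero_eq_constantCoeff, hf, mul_zero]

lemma jab_key {K : Type*} [CommRing K] (f₁ f₂ h : PowerSeries K)
    (hf₂0 : constantCoeff f₂ = 0)
    (hh : ∀ n : ℕ, coeff n h =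
      ∑ j ∈ Finset.range (n + 1), coeff j f₁ * coeff n (f₂ ^ j)) :
    ∀ k n : ℕ, coeff n (h ^ k) =
      ∑ i ∈ Finset.range (n + 1), coeff i (f₁ ^ k) * coeff n (f₂ ^ i) := by
  intro k
  induction k with
  | zero =>
    intro n
    simp [coeff_one, Finset.sum_ite_eq']
  | succ k ih =>
    intro n
    have hC : ∀ t : ℕ, n < t → coeff n (f₂ ^ t) = 0 :=
      fun t ht => jab_coeff_pow_eq_zero f₂ hf₂0 t n ht
    rw [pow_succ, coeff_mul]
    -- extend inner sums to range (n+1)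
    have step1 : ∀ p ∈ Finset.HasAntidiagonal.antidiagonal n,
        coeff p.1 (h ^ k) * coeff p.2 h =
        ∑ i ∈ Finset.range (n + 1), ∑ j ∈ Finset.range (n + 1),
          (coeff i (f₁ ^ k) * coeff j f₁) * (coeff p.1 (f₂ ^ i) * coeff p.2 (f₂ ^ j)) := by
      rintro ⟨x, y⟩ hxy
      rw [Finset.HasAntidiagonal.mem_antidiagonal] at hxy
      have hx : x + 1 ≤ n + 1 := by omega
      have hy : y + 1 ≤ n + 1 := by omega
      have e1 : ∑ i ∈ Finset.range (x + 1), coeff i (f₁ ^ k) * coeff x (f₂ ^ i) =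
          ∑ i ∈ Finset.range (n + 1), coeff i (f₁ ^ k) * coeff x (f₂ ^ i) :=
        Finset.sum_subset (Finset.range_subset_range.2 hx) (fun i _ hi => by
          rw [jab_coeff_pow_eq_zero f₂ hf₂0 i x (by simpa using hi), mul_zero])
      have e2 : ∑ j ∈ Finset.range (y + 1), coeff j f₁ * coeff y (f₂ ^ j) =
          ∑ j ∈ Finset.range (n + 1), coeff j f₁ * coeff y (f₂ ^ j) :=
        Finset.sum_subset (Finset.range_subset_range.2 hy) (fun j _ hj => by
          rw [jab_coeff_pow_eq_zero f₂ hf₂0 j y (by simpa using hj), mul_zero])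
      rw [ih x, hh y, e1, e2, Finset.sum_mul_sum]
      exact Finset.sum_congr rfl fun i _ => Finset.sum_congr rfl fun j _ => by ring
    rw [Finset.sum_congr rfl step1]
    rw [Finset.sum_comm]
    rw [Finset.sum_congr rfl (fun i (_ : i ∈ Finset.range (n+1)) => (Finset.sum_comm ..))]
    have step2 : ∀ i ∈ Finset.range (n + 1), ∀ j ∈ Finset.range (n + 1),
        ∑ p ∈ Finset.HasAntidiagonal.antidiagonal n,
          (coeff i (f₁ ^ k) * coeff j f₁) * (coeff p.1 (f₂ ^ i) * coeff p.2 (f₂ ^ j)) =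
        (coeff i (f₁ ^ k) * coeff j f₁) * coeff n (f₂ ^ (i + j)) := by
      intro i _ j _
      rw [← Finset.mul_sum, ← coeff_mul, ← pow_add]
    calc
      ∑ i ∈ Finset.range (n + 1), ∑ j ∈ Finset.range (n + 1),
          ∑ p ∈ Finset.HasAntidiagonal.antidiagonal n,
            (coeff i (f₁ ^ k) * coeff j f₁) * (coeff p.1 (f₂ ^ i) * coeff p.2 (f₂ ^ j))
        = ∑ i ∈ Finset.range (n + 1), ∑ j ∈ Finset.range (n + 1),
            (coeff i (f₁ ^ k) * coeff j f₁) * coeff n (f₂ ^ (i + j)) := by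
          exact Finset.sum_congr rfl fun i hi => Finset.sum_congr rfl fun j hj => step2 i hi j hj
      _ = ∑ p ∈ (Finset.range (n + 1) ×ˢ Finset.range (n + 1)).filter (fun p => p.1 + p.2 ≤ n),
            (coeff p.1 (f₁ ^ k) * coeff p.2 f₁) * coeff n (f₂ ^ (p.1 + p.2)) := by
          rw [← Finset.sum_product']
          rw [Finset.sum_filter_of_ne]
          rintro ⟨i, j⟩ _ hne
          by_contra hc
          exact hne (by rw [hC (i + j) (by omega), mul_zero])
      _ = ∑ m ∈ Finset.range (n + 1), ∑ p ∈ Finset.HasAntidiagonal.antidiagonal m,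
            (coeff p.1 (f₁ ^ k) * coeff p.2 f₁) * coeff n (f₂ ^ m) := by
          rw [Finset.sum_sigma']
          symm
          refine Finset.sum_nbij' (fun q => q.2) (fun p => ⟨p.1 + p.2, p⟩) ?_ ?_ ?_ ?_ ?_
          · rintro ⟨m, i, j⟩ hq
            simp only [Finset.mem_sigma, Finset.mem_range, Finset.HasAntidiagonal.mem_antidiagonal] at hq
            simp only [Finset.mem_filter, Finset.mem_product, Finset.mem_range]
            omega
          · rintro ⟨i, j⟩ hp
            simp only [Finset.mem_filter, Finset.mem_product, Finset.mem_range] at hp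
            simp only [Finset.mem_sigma, Finset.mem_range, Finset.HasAntidiagonal.mem_antidiagonal]
            exact ⟨by omega, trivial⟩
          · rintro ⟨m, i, j⟩ hq
            simp only [Finset.mem_sigma, Finset.mem_range, Finset.HasAntidiagonal.mem_antidiagonal] at hq
            simp [hq.2]
          · rintro ⟨i, j⟩ _
            rfl
          · rintro ⟨m, i, j⟩ hq
            simp only [Finset.mem_sigma, Finset.mem_range, Finset.HasAntidiagonal.mem_antidiagonal] at hq
            simp [hq.2]
      _ = ∑ m ∈ Finset.range (n + 1), coeff m (f₁ ^ (k + 1)) * coeff n (f₂ ^ m) := by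
          refine Finset.sum_congr rfl fun m _ => ?_
          rw [pow_succ, coeff_mul, Finset.sum_mul]

open PowerSeries in
theorem jabotinsky_composition {K : Type*} [Field K] [CharZero K] (f₁ f₂ h : PowerSeries K)
    (hf₁0 : constantCoeff f₁ = 0) (hf₁1 : coeff 1 f₁ ≠ 0)
    (hf₂0 : constantCoeff f₂ = 0) (hf₂1 : coeff 1 f₂ ≠ 0)
    (hh : ∀ n : ℕ, coeff n h =
      ∑ j ∈ Finset.range (n + 1), coeff j f₁ * coeff n (f₂ ^ j)) :
    ∀ n k : ℕ, 1 ≤ n → 1 ≤ k →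
      coeff n (h ^ k) =
        ∑ i ∈ Finset.range (n + 1), coeff n (f₂ ^ i) * coeff i (f₁ ^ k) := by
  intro n k _ _
  rw [jab_key f₁ f₂ h hf₂0 hh k n]
  exact Finset.sum_congr rfl fun i _ => mul_comm _ _
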